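/- For a finite group G of order n, the map sending a residue class a coprime to n to the sign of the permutation induced on the conjugacy classes of G by C ↦ {g^a : g ∈ C} is a well-defined group homomorphism from (Z/nZ)* to {±1}. -/

import Mathlib

open scoped Classical

noncomputable instance conjClassesFintype {G : Type*} [Group G] [Fintype G] :
    Fintype (ConjClasses G) := Fintype.ofFinite _

section Aux

variable {G : Type*} [Group G] [Fintype G]

private lemma pow_eq_of_cast_eq {g : G} {a b : ℕ}
    (h : (a : ZMod (Fintype.card G)) = b) : g ^ a = g ^ b := by
  have hmod : a ≡ b [MOD Fintype.card G] := (ZMod.natCast_eq_natCast_iff _ _ _).1 h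
  have hmod' : a ≡ b [MOD orderOf g] := hmod.of_dvd (orderOf_dvd_card)
  rw [← pow_mod_orderOf g a, ← pow_mod_orderOf g b, hmod']

private def powConjMap (a : ℕ) : ConjClasses G → ConjClasses G :=
  Quotient.map (· ^ a) (by
    rintro x y ⟨c, hc⟩
    exact ⟨c, by simpa using (hc.pow_right a)⟩)

private lemma powConjMap_mk (a : ℕ) (g : G) :
    powConjMap a (ConjClasses.mk g) = ConjClasses.mk (g ^ a) := rfl

private noncomputable def conjPerm (u : (ZMod (Fintype.card G))ˣ) :
    Equiv.Perm (ConjClasses G) where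
  toFun := powConjMap (u : ZMod (Fintype.card G)).val
  invFun := powConjMap ((u⁻¹ : (ZMod (Fintype.card G))ˣ) : ZMod (Fintype.card G)).val
  left_inv := by
    haveI : NeZero (Fintype.card G) := ⟨Fintype.card_ne_zero⟩
    refine fun x => Quotient.inductionOn x (fun g => ?_)
    show powConjMap _ (powConjMap _ (ConjClasses.mk g)) = ConjClasses.mk g
    rw [powConjMap_mk, powConjMap_mk, ← pow_mul]
    congr 1
    have : (((u : ZMod (Fintype.card G)).val *
        ((u⁻¹ : (ZMod (Fintype.card G))ˣ) : ZMod (Fintype.card G)).val : ℕ) :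
        ZMod (Fintype.card G)) = ((1 : ℕ) : ZMod (Fintype.card G)) := by
      push_cast
      rw [ZMod.natCast_val, ZMod.natCast_val, ZMod.cast_id, ZMod.cast_id]
      simp [← Units.val_mul]
    rw [pow_eq_of_cast_eq this, pow_one]
  right_inv := by
    haveI : NeZero (Fintype.card G) := ⟨Fintype.card_ne_zero⟩
    refine fun x => Quotient.inductionOn x (fun g => ?_)
    show powConjMap _ (powConjMap _ (ConjClasses.mk g)) = ConjClasses.mk g
    rw [powConjMap_mk, powConjMap_mk, ← pow_mul]
    congr 1
    have : ((((u⁻¹ : (ZMod (Fintype.card G))ˣ) : ZMod (Fintype.card G)).val *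
        (u : ZMod (Fintype.card G)).val : ℕ) :
        ZMod (Fintype.card G)) = ((1 : ℕ) : ZMod (Fintype.card G)) := by
      push_cast
      rw [ZMod.natCast_val, ZMod.natCast_val, ZMod.cast_id, ZMod.cast_id]
      simp [← Units.val_mul]
    rw [pow_eq_of_cast_eq this, pow_one]

private lemma conjPerm_mk (u : (ZMod (Fintype.card G))ˣ) (g : G) :
    conjPerm u (ConjClasses.mk g) = ConjClasses.mk (g ^ (u : ZMod (Fintype.card G)).val) := rfl

private lemma conjPerm_mul (u v : (ZMod (Fintype.card G))ˣ) :
    conjPerm (u * v) = conjPerm u * conjPerm v := by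
  haveI : NeZero (Fintype.card G) := ⟨Fintype.card_ne_zero⟩
  refine Equiv.ext fun x => Quotient.inductionOn x (fun g => ?_)
  show conjPerm (u * v) (ConjClasses.mk g) = conjPerm u (conjPerm v (ConjClasses.mk g))
  rw [conjPerm_mk, conjPerm_mk, conjPerm_mk, ← pow_mul]
  congr 1
  refine pow_eq_of_cast_eq ?_
  push_cast
  rw [ZMod.natCast_val, ZMod.natCast_val, ZMod.natCast_val, ZMod.cast_id, ZMod.cast_id,
    ZMod.cast_id]
  exact mul_comm _ _

end Aux

/-- For a finite group `G` of order `n`, sending a residue class `a` coprime to `n` to the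
sign of the permutation induced on the conjugacy classes of `G` by `C ↦ {g^a : g ∈ C}`
is a well-defined group homomorphism `(ℤ/nℤ)ˣ → {±1}`. -/
theorem quadratic_symbol_hom (G : Type*) [Group G] [Fintype G] :
    ∃ φ : (ZMod (Fintype.card G))ˣ →* ℤˣ,
      ∀ (a : ℕ) (ha : Nat.Coprime a (Fintype.card G)) (σ : Equiv.Perm (ConjClasses G)),
        (∀ g : G, σ (ConjClasses.mk g) = ConjClasses.mk (g ^ a)) →
          φ (ZMod.unitOfCoprime a ha) = Equiv.Perm.sign σ := by
  haveI : NeZero (Fintype.card G) := ⟨Fintype.card_ne_zero⟩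
  refine ⟨{ toFun := fun u => Equiv.Perm.sign (conjPerm u)
            map_one' := ?_
            map_mul' := fun u v => by
              show Equiv.Perm.sign (conjPerm (u * v)) =
                Equiv.Perm.sign (conjPerm u) * Equiv.Perm.sign (conjPerm v)
              rw [conjPerm_mul, map_mul] }, ?_⟩
  · have h1 : conjPerm (1 : (ZMod (Fintype.card G))ˣ) = 1 := by
      refine Equiv.ext fun x => Quotient.inductionOn x (fun g => ?_)
      show conjPerm 1 (ConjClasses.mk g) = ConjClasses.mk g
      rw [conjPerm_mk]
      congr 1
      have : ((((1 : (ZMod (Fintype.card G))ˣ) : ZMod (Fintype.card G)).val : ℕ) :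
          ZMod (Fintype.card G)) = ((1 : ℕ) : ZMod (Fintype.card G)) := by
        rw [ZMod.natCast_val, ZMod.cast_id]; simp
      rw [pow_eq_of_cast_eq this, pow_one]
    show Equiv.Perm.sign (conjPerm (1 : (ZMod (Fintype.card G))ˣ)) = 1
    rw [h1, map_one]
  · intro a ha σ hσ
    have : conjPerm (ZMod.unitOfCoprime a ha) = σ := by
      refine Equiv.ext fun x => Quotient.inductionOn x (fun g => ?_)
      show conjPerm _ (ConjClasses.mk g) = σ (ConjClasses.mk g)
      rw [conjPerm_mk, hσ]
      congr 1
      refine pow_eq_of_cast_eq ?_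
      rw [ZMod.natCast_val, ZMod.cast_id, ZMod.coe_unitOfCoprime]
    show Equiv.Perm.sign (conjPerm (ZMod.unitOfCoprime a ha)) = Equiv.Perm.sign σ
    rw [this]
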